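/- Lemma 2.5: Let f : 𝒞₀ → ℝ. Then f is continuous with respect to the sup norm |·|_C on 𝒞₀ if and only if the functional f̂ : Λ → ℝ defined by f̂(t,x) := f(x) is continuous on (Λ, d_∞). -/

import Mathlib

open Filter Topology MeasureTheory Matrix
open scoped RealInnerProductSpace

noncomputable section

namespace PathHJB

/-- The domain `(-∞,0]` of the paths. -/
abbrev PathDom : Type := Set.Iic (0 : ℝ)

abbrev Eucl (d : ℕ) := EuclideanSpace ℝ (Fin d)

/-- Paths on `(-∞,0]` with values in `ℝ^d`. -/
abbrev Pth (d : ℕ) := PathDom → Eucl d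

def zeroPt : PathDom := ⟨0, Set.self_mem_Iic⟩

/-- The sup norm `|x|_C`. -/
def normC {d : ℕ} (x : Pth d) : ℝ := ⨆ θ : PathDom, ‖x θ‖

/-- The shifted path `x_h`. -/
def shift {d : ℕ} (x : Pth d) (h : ℝ) : Pth d := fun θ =>
  if hθ : -h ≤ θ.1 then x zeroPt
  else x ⟨θ.1 + h, Set.mem_Iic.mpr (by push_neg at hθ; linarith)⟩

/-- The vertical perturbation `x + v · 1_{{0}}`. -/
def vpert {d : ℕ} (x : Pth d) (v : Eucl d) : Pth d := fun θ =>
  if θ.1 = 0 then x θ + v else x θ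

/-- Càdlàg: right-continuous with left limits. -/
def IsCadlag {d : ℕ} (x : Pth d) : Prop :=
  (∀ θ : PathDom, ContinuousWithinAt x {η : PathDom | θ.1 ≤ η.1} θ) ∧
  (∀ θ : PathDom, ∃ L : Eucl d, Tendsto x (nhdsWithin θ {η : PathDom | η.1 < θ.1}) (nhds L))

/-- `𝒟₀`: càdlàg paths vanishing at `-∞`. -/
def D0 (d : ℕ) : Set (Pth d) := {x | IsCadlag x ∧ Tendsto x atBot (nhds 0)}

/-- `𝒞₀`: continuous paths vanishing at `-∞`. -/
def C0 (d : ℕ) : Set (Pth d) := {x | Continuous x ∧ Tendsto x atBot (nhds 0)}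

/-- The metric `d_∞`. -/
def dInfty {d : ℕ} (p q : ℝ × Pth d) : ℝ :=
  if p.1 ≤ q.1 then |q.1 - p.1| + normC (shift p.2 (q.1 - p.1) - q.2)
  else |p.1 - q.1| + normC (shift q.2 (p.1 - q.1) - p.2)

/-- `Λ̂^t = [t,∞) × 𝒟₀`. -/
def LamHat (d : ℕ) (t : ℝ) : Set (ℝ × Pth d) := {p | t ≤ p.1 ∧ p.2 ∈ D0 d}

/-- `Λ^t = [t,∞) × 𝒞₀`. -/
def Lam (d : ℕ) (t : ℝ) : Set (ℝ × Pth d) := {p | t ≤ p.1 ∧ p.2 ∈ C0 d}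

def stdBasis (d : ℕ) (i : Fin d) : Eucl d := EuclideanSpace.single i 1

/-- Horizontal (Dupire) derivative. -/
def HasHorizDerivAt {d : ℕ} (f : ℝ × Pth d → ℝ) (p : ℝ × Pth d) (v : ℝ) : Prop :=
  Tendsto (fun h : ℝ => (f (p.1 + h, shift p.2 h) - f p) / h) (𝓝[>] (0:ℝ)) (𝓝 v)

/-- Vertical (Dupire) derivative in direction `e_i`. -/
def HasVertDerivAt {d : ℕ} (f : ℝ × Pth d → ℝ) (p : ℝ × Pth d) (i : Fin d) (v : ℝ) : Prop :=
  Tendsto (fun h : ℝ => (f (p.1, vpert p.2 (h • stdBasis d i)) - f p) / h) (𝓝[≠] (0:ℝ)) (𝓝 v)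

/-- Continuity on a set w.r.t. `d_∞`. -/
def DContinuousOn {d : ℕ} {E : Type*} [NormedAddCommGroup E]
    (f : ℝ × Pth d → E) (S : Set (ℝ × Pth d)) : Prop :=
  ∀ p ∈ S, ∀ ε > (0:ℝ), ∃ δ > (0:ℝ), ∀ q ∈ S, dInfty p q < δ → ‖f q - f p‖ < ε

/-- Uniform continuity on a set w.r.t. `d_∞`. -/
def DUnifContOn {d : ℕ} {E : Type*} [NormedAddCommGroup E]
    (f : ℝ × Pth d → E) (S : Set (ℝ × Pth d)) : Prop :=
  ∀ ε > (0:ℝ), ∃ δ > (0:ℝ), ∀ p ∈ S, ∀ q ∈ S, dInfty p q < δ → ‖f q - f p‖ < ε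

def BoundedOn {d : ℕ} {E : Type*} [NormedAddCommGroup E]
    (f : ℝ × Pth d → E) (S : Set (ℝ × Pth d)) : Prop :=
  ∃ M : ℝ, ∀ p ∈ S, ‖f p‖ ≤ M

def PolyGrowthOn {d : ℕ} {E : Type*} [NormedAddCommGroup E]
    (f : ℝ × Pth d → E) (S : Set (ℝ × Pth d)) : Prop :=
  ∃ C : ℝ, ∃ k : ℕ, ∀ p ∈ S, ‖f p‖ ≤ C * (1 + |p.1| + normC p.2) ^ k

/-- `f ∈ C_p^{1,2}(Λ̂^t)`, with prescribed pathwise derivatives. -/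
structure IsCp12Hat (d : ℕ) (t : ℝ) (f : ℝ × Pth d → ℝ) (ft : ℝ × Pth d → ℝ)
    (fx : ℝ × Pth d → Eucl d) (fxx : ℝ × Pth d → Matrix (Fin d) (Fin d) ℝ) : Prop where
  horiz : ∀ p ∈ LamHat d t, HasHorizDerivAt f p (ft p)
  vert : ∀ p ∈ LamHat d t, ∀ i, HasVertDerivAt f p i (fx p i)
  vert2 : ∀ p ∈ LamHat d t, ∀ i j, HasVertDerivAt (fun q => fx q j) p i (fxx p i j)
  cont : DContinuousOn f (LamHat d t)
  cont_t : DContinuousOn ft (LamHat d t)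
  cont_x : DContinuousOn fx (LamHat d t)
  cont_xx : ∀ i j, DContinuousOn (fun p => fxx p i j) (LamHat d t)
  growth : PolyGrowthOn f (LamHat d t)
  growth_t : PolyGrowthOn ft (LamHat d t)
  growth_x : PolyGrowthOn fx (LamHat d t)
  growth_xx : ∀ i j, PolyGrowthOn (fun p => fxx p i j) (LamHat d t)

/-- Hilbert–Schmidt norm of a matrix. -/
def hsNorm {m n : ℕ} (A : Matrix (Fin m) (Fin n) ℝ) : ℝ :=
  Real.sqrt (∑ i, ∑ j, (A i j) ^ 2)

/-- The Hamiltonian `H`. -/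
def Ham {d n : ℕ} {U : Type*} (b : Pth d → U → Eucl d)
    (σ' : Pth d → U → Matrix (Fin d) (Fin n) ℝ) (q : Pth d → U → ℝ)
    (x : Pth d) (p : Eucl d) (l : Matrix (Fin d) (Fin d) ℝ) : ℝ :=
  ⨅ u : U, ((inner ℝ p (b x u) : ℝ) + (1/2) * (l * (σ' x u * (σ' x u)ᵀ)).trace + q x u)

/-- Hypothesis 4.2. -/
structure Hyp42 {d n : ℕ} {U : Type*} [PseudoMetricSpace U] (L : ℝ)
    (b : Pth d → U → Eucl d) (σ' : Pth d → U → Matrix (Fin d) (Fin n) ℝ)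
    (q : Pth d → U → ℝ) : Prop where
  pos : 0 < L
  continuous : ∀ x ∈ C0 d, ∀ u : U, ∀ ε > (0:ℝ), ∃ δ > (0:ℝ), ∀ y ∈ C0 d, ∀ u' : U,
    normC (x - y) < δ → dist u u' < δ →
    ‖b x u - b y u'‖ < ε ∧ hsNorm (σ' x u - σ' y u') < ε ∧ |q x u - q y u'| < ε
  bound_b : ∀ x ∈ C0 d, ∀ u : U, ‖b x u‖ ^ 2 ≤ L ^ 2 * (1 + normC x ^ 2)
  bound_σ : ∀ x ∈ C0 d, ∀ u : U, hsNorm (σ' x u) ^ 2 ≤ L ^ 2 * (1 + normC x ^ 2)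
  bound_q : ∀ x ∈ C0 d, ∀ u : U, (q x u) ^ 2 ≤ L ^ 2 * (1 + normC x ^ 2)
  lip_b : ∀ x ∈ C0 d, ∀ y ∈ C0 d, ∀ u : U, ‖b x u - b y u‖ ≤ L * normC (x - y)
  lip_σ : ∀ x ∈ C0 d, ∀ y ∈ C0 d, ∀ u : U, hsNorm (σ' x u - σ' y u) ≤ L * normC (x - y)
  lip_q : ∀ x ∈ C0 d, ∀ y ∈ C0 d, ∀ u : U, |q x u - q y u| ≤ L * normC (x - y)

/-- Viscosity subsolution of `-λ w + ∂_t w + H(x, ∂_x w, ∂_{xx} w) = 0`. -/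
def IsViscSubsol {d n : ℕ} {U : Type*} (lam : ℝ) (b : Pth d → U → Eucl d)
    (σ' : Pth d → U → Matrix (Fin d) (Fin n) ℝ) (q : Pth d → U → ℝ)
    (w : Pth d → ℝ) : Prop :=
  ∀ s : ℝ, 0 ≤ s → ∀ x ∈ C0 d,
    ∀ (φ φt : ℝ × Pth d → ℝ) (φx : ℝ × Pth d → Eucl d)
      (φxx : ℝ × Pth d → Matrix (Fin d) (Fin d) ℝ),
      IsCp12Hat d s φ φt φx φxx →
      w x - φ (s, x) = 0 →
      (∀ p ∈ Lam d s, w p.2 - φ p ≤ 0) →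
      0 ≤ -lam * w x + φt (s, x) + Ham b σ' q x (φx (s, x)) (φxx (s, x))

/-- Viscosity supersolution. -/
def IsViscSupersol {d n : ℕ} {U : Type*} (lam : ℝ) (b : Pth d → U → Eucl d)
    (σ' : Pth d → U → Matrix (Fin d) (Fin n) ℝ) (q : Pth d → U → ℝ)
    (w : Pth d → ℝ) : Prop :=
  ∀ s : ℝ, 0 ≤ s → ∀ x ∈ C0 d,
    ∀ (φ φt : ℝ × Pth d → ℝ) (φx : ℝ × Pth d → Eucl d)
      (φxx : ℝ × Pth d → Matrix (Fin d) (Fin d) ℝ),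
      IsCp12Hat d s φ φt φx φxx →
      w x + φ (s, x) = 0 →
      (∀ p ∈ Lam d s, 0 ≤ w p.2 + φ p) →
      -lam * w x - φt (s, x) + Ham b σ' q x (-φx (s, x)) (-φxx (s, x)) ≤ 0


/-- The two-argument functional `S_m(t,x,s,y)`. -/
def SmP {d : ℕ} (m : ℕ) (p q : ℝ × Pth d) : ℝ :=
  if normC (shift p.2 (max (q.1 - p.1) 0) - shift q.2 (max (p.1 - q.1) 0)) = 0 then 0
  else (normC (shift p.2 (max (q.1 - p.1) 0) - shift q.2 (max (p.1 - q.1) 0)) ^ (2*m)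
        - ‖p.2 zeroPt - q.2 zeroPt‖ ^ (2*m)) ^ 3
       / normC (shift p.2 (max (q.1 - p.1) 0) - shift q.2 (max (p.1 - q.1) 0)) ^ (4*m)

/-- `Υ^{m,M}(t,x,s,y)`. -/
def UpsP {d : ℕ} (m : ℕ) (M : ℝ) (p q : ℝ × Pth d) : ℝ :=
  SmP m p q + M * ‖p.2 zeroPt - q.2 zeroPt‖ ^ (2*m)

/-- `Ῡ^{m,M}(t,x,s,y) = Υ^{m,M}(t,x,s,y) + |s-t|²`. -/
def UpsBarP {d : ℕ} (m : ℕ) (M : ℝ) (p q : ℝ × Pth d) : ℝ :=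
  UpsP m M p q + (q.1 - p.1) ^ 2

/-- The single-path functional `Υ^{m,M}(x)`. -/
def Ups0 {d : ℕ} (m : ℕ) (M : ℝ) (x : Pth d) : ℝ :=
  (if normC x = 0 then 0
   else (normC x ^ (2*m) - ‖x zeroPt‖ ^ (2*m)) ^ 3 / normC x ^ (4*m))
  + M * ‖x zeroPt‖ ^ (2*m)

/-- `w̃^{t̂}` before taking the upper semicontinuous envelope:
the sup of `w(t,ξ)` over `ξ ∈ 𝒞₀` with `ξ(0) = x₀`. -/
def sliceSup {d : ℕ} (w : ℝ × Pth d → ℝ) (t : ℝ) (x0 : Eucl d) : ℝ :=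
  sSup {r : ℝ | ∃ ξ ∈ C0 d, ξ zeroPt = x0 ∧ r = w (t, ξ)}

def tildeW {d : ℕ} (w : ℝ × Pth d → ℝ) (tHat : ℝ) : ℝ × Eucl d → ℝ := fun p =>
  if tHat ≤ p.1 then sliceSup w p.1 p.2
  else sliceSup w tHat p.2 - Real.sqrt (tHat - p.1)

/-- Upper semicontinuous envelope. -/
def uscEnv {d : ℕ} (g : ℝ × Eucl d → ℝ) : ℝ × Eucl d → ℝ := fun p =>
  Filter.limsup g (nhds p)

/-- A local modulus of continuity. -/
structure LocalModulus (ρ : ℝ → ℝ → ℝ) : Prop where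
  cont : Continuous fun p : ℝ × ℝ => ρ p.1 p.2
  nonneg : ∀ t r, 0 ≤ t → 0 ≤ r → 0 ≤ ρ t r
  zero : ∀ r, 0 ≤ r → ρ 0 r = 0
  subadd : ∀ t s r, 0 ≤ t → 0 ≤ s → 0 ≤ r → ρ (t + s) r ≤ ρ t r + ρ s r
  mono : ∀ t r r', 0 ≤ t → 0 ≤ r → r ≤ r' → ρ t r ≤ ρ t r'

/-- Upper semicontinuity on a set w.r.t. `d_∞`. -/
def DUSCOn {d : ℕ} (w : ℝ × Pth d → ℝ) (S : Set (ℝ × Pth d)) : Prop :=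
  ∀ p ∈ S, ∀ ε > (0:ℝ), ∃ δ > (0:ℝ), ∀ q ∈ S, dInfty p q < δ → w q < w p + ε

def BddAboveOn {d : ℕ} (w : ℝ × Pth d → ℝ) (S : Set (ℝ × Pth d)) : Prop :=
  ∃ M : ℝ, ∀ p ∈ S, w p ≤ M

/-- `limsup_{t+|x|_C → ∞} w(t,x)/(t+|x|_C) < 0` on `Λ`. -/
def NegLimsupAtInfty {d : ℕ} (w : ℝ × Pth d → ℝ) : Prop :=
  ∃ c < (0:ℝ), ∃ R : ℝ, ∀ p ∈ Lam d 0, R ≤ p.1 + normC p.2 →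
    w p ≤ c * (p.1 + normC p.2)

/-- `φ ∈ C^{1,2}([0,∞) × ℝ^d)` with prescribed derivatives. -/
structure IsC12Fin (d : ℕ) (φ φt : ℝ × Eucl d → ℝ) (φx : ℝ × Eucl d → Eucl d)
    (φxx : ℝ × Eucl d → Matrix (Fin d) (Fin d) ℝ) : Prop where
  ht : ∀ p : ℝ × Eucl d, HasDerivAt (fun s => φ (s, p.2)) (φt p) p.1
  hx : ∀ p : ℝ × Eucl d, HasGradientAt (fun y => φ (p.1, y)) (φx p) p.2
  hxx : ∀ p : ℝ × Eucl d, ∀ i j,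
    HasDerivAt (fun h : ℝ => φx (p.1, p.2 + h • stdBasis d j) i) (φxx p i j) 0
  cont : Continuous φ
  cont_t : Continuous φt
  cont_x : Continuous φx
  cont_xx : ∀ i j, Continuous fun p => φxx p i j

/-- The class `Φ(t̂, x̂₀, T)` of Definition 6.1. -/
def PhiClass (d : ℕ) (tHat : ℝ) (xHat0 : Eucl d) (T : ℝ) (f : ℝ × Eucl d → ℝ) : Prop :=
  ∃ r > (0:ℝ), ∀ L > (0:ℝ),
    ∀ (φ φt : ℝ × Eucl d → ℝ) (φx : ℝ × Eucl d → Eucl d)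
      (φxx : ℝ × Eucl d → Matrix (Fin d) (Fin d) ℝ),
      IsC12Fin d φ φt φx φxx →
      ∀ t : ℝ, ∀ x0 : Eucl d, 0 < t → t < T →
        (∀ s : ℝ, ∀ y : Eucl d, 0 ≤ s → s ≤ T → f (s, y) - φ (s, y) ≤ f (t, x0) - φ (t, x0)) →
        ∃ C > (0:ℝ),
          (|t - tHat| + ‖x0 - xHat0‖ < r →
           |f (t, x0)| + ‖φx (t, x0)‖ + hsNorm (φxx (t, x0)) ≤ L →
           C ≤ φt (t, x0))

/-- Operator norm of a square matrix, via the associated Euclidean linear map. -/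
def matOpNorm {ι : Type*} [Fintype ι] [DecidableEq ι] (A : Matrix ι ι ℝ) : ℝ :=
  ‖LinearMap.toContinuousLinearMap (Matrix.toEuclideanLin A)‖

/-- The second-derivative matrix of `φ : ℝ^d × ℝ^d → ℝ` at a point, as a
`(2d) × (2d)` matrix indexed by `Fin d ⊕ Fin d`. -/
def hess2 {d : ℕ} (φ : Eucl d × Eucl d → ℝ) (z : Eucl d × Eucl d) :
    Matrix (Fin d ⊕ Fin d) (Fin d ⊕ Fin d) ℝ := fun k l =>
  iteratedFDeriv ℝ 2 φ z
    ![Sum.elim (fun i => ((stdBasis d i, 0) : Eucl d × Eucl d))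
        (fun j => ((0, stdBasis d j) : Eucl d × Eucl d)) k,
      Sum.elim (fun i => ((stdBasis d i, 0) : Eucl d × Eucl d))
        (fun j => ((0, stdBasis d j) : Eucl d × Eucl d)) l]

/-- Hessian matrix of `φ : ℝ^d → ℝ`. -/
def hess1 {d : ℕ} (φ : Eucl d → ℝ) (z : Eucl d) : Matrix (Fin d) (Fin d) ℝ := fun i j =>
  iteratedFDeriv ℝ 2 φ z ![stdBasis d i, stdBasis d j]


/-- The path `x - a_{t-t̂}` appearing in `S_m(t,x,t̂,a)` (for `t ≥ t̂`). -/
def zRel {d : ℕ} (tHat : ℝ) (a : Pth d) (p : ℝ × Pth d) : Pth d :=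
  shift p.2 (max (tHat - p.1) 0) - shift a (max (p.1 - tHat) 0)
section Aux

variable {d : ℕ}

private lemma normC_nonneg' (x : Pth d) : 0 ≤ normC x :=
  Real.iSup_nonneg fun _ => norm_nonneg _

private lemma normC_le' {x : Pth d} {a : ℝ} (ha : 0 ≤ a) (h : ∀ θ, ‖x θ‖ ≤ a) :
    normC x ≤ a := Real.iSup_le h ha

private lemma le_normC' {x : Pth d} {M : ℝ} (hM : ∀ θ, ‖x θ‖ ≤ M) (θ : PathDom) :
    ‖x θ‖ ≤ normC x :=
  le_ciSup ⟨M, by rintro r ⟨η, rfl⟩; exact hM η⟩ θ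

/-- The retraction `ℝ → (-∞,0]`. -/
private def emb (t : ℝ) : PathDom := ⟨min t 0, min_le_right t 0⟩

private lemma emb_coe (θ : PathDom) : emb θ.1 = θ := Subtype.ext (min_eq_left θ.2)

private lemma emb_continuous : Continuous emb :=
  (continuous_id.min continuous_const).subtype_mk _

private lemma emb_tendsto : Tendsto emb atBot atBot := by
  refine tendsto_atBot.mpr fun b => eventually_atBot.mpr ⟨b.1, fun t ht => ?_⟩
  exact Subtype.coe_le_coe.mp (le_trans (min_le_left _ _) ht)

private lemma shift_bdd' {x : Pth d} {M h : ℝ} (hM : ∀ θ, ‖x θ‖ ≤ M) :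
    ∀ θ, ‖shift x h θ‖ ≤ M := by
  intro θ; unfold shift; split <;> apply hM

private lemma shift_zero' (x : Pth d) : shift x 0 = x := by
  funext θ
  unfold shift
  split
  · next hθ =>
      have h0 : θ.1 = 0 := le_antisymm θ.2 (by simpa using hθ)
      exact congrArg x (Subtype.ext h0.symm)
  · next => exact congrArg x (Subtype.ext (add_zero θ.1))

private lemma C0_bdd {x : Pth d} (hx : x ∈ C0 d) : ∃ M, ∀ θ : PathDom, ‖x θ‖ ≤ M := by
  set g : ℝ → Eucl d := fun t => x (emb t) with hg
  have hgc : Continuous g := hx.1.comp emb_continuous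
  have htend : Tendsto g atBot (nhds 0) := hx.2.comp emb_tendsto
  have h1 : ∀ᶠ t in atBot, ‖g t‖ < 1 := by
    have := htend.norm
    rw [norm_zero] at this
    exact this.eventually_lt_const one_pos
  obtain ⟨T, hT⟩ := eventually_atBot.mp h1
  obtain ⟨C, hC⟩ := (isCompact_Icc (a := T) (b := 0)).exists_bound_of_continuousOn
    hgc.continuousOn
  refine ⟨max 1 C, fun θ => ?_⟩
  have hθg : x θ = g θ.1 := by rw [hg]; exact congrArg x (emb_coe θ).symm
  rw [hθg]
  rcases le_total θ.1 T with hle | hle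
  · exact le_trans (hT θ.1 hle).le (le_max_left _ _)
  · exact le_trans (hC θ.1 ⟨hle, θ.2⟩) (le_max_right _ _)

private lemma C0_uniform {x : Pth d} (hx : x ∈ C0 d) {ε : ℝ} (hε : 0 < ε) :
    ∃ δ > (0:ℝ), ∀ θ η : PathDom, |θ.1 - η.1| < δ → ‖x θ - x η‖ < ε := by
  set g : ℝ → Eucl d := fun t => x (emb t) with hg
  have hgc : Continuous g := hx.1.comp emb_continuous
  set G : ℝ → Eucl d := fun t => g t - min (max t 0) 1 • g 0 with hG
  have hGc : Continuous G := by
    apply hgc.sub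
    exact (((continuous_id.max continuous_const).min continuous_const).smul continuous_const)
  have hGg : ∀ t ≤ (0:ℝ), G t = g t := by
    intro t ht
    simp [hG, max_eq_right ht, min_eq_left (zero_le_one' ℝ)]
  have hcoc : Tendsto G (cocompact ℝ) (𝓝 0) := by
    rw [cocompact_eq_atBot_atTop, tendsto_sup]
    constructor
    · refine (hx.2.comp emb_tendsto).congr' ?_
      exact eventually_atBot.mpr ⟨0, fun t ht => (hGg t ht).symm⟩
    · exact tendsto_const_nhds.congr'
        (eventually_atTop.mpr ⟨1, fun t ht => (by
          have h0t : (0:ℝ) ≤ t := le_trans zero_le_one ht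
          have hgt : g t = g 0 := by
            rw [hg]
            refine congrArg x (Subtype.ext ?_)
            simp [emb, min_eq_right h0t]
          simp [hG, hgt, max_eq_left h0t, min_eq_right ht] : (0:Eucl d) = G t)⟩)
  have hUC : UniformContinuous G := hGc.uniformContinuous_of_tendsto_cocompact hcoc
  obtain ⟨δ, hδ, hd⟩ := Metric.uniformContinuous_iff.mp hUC ε hε
  refine ⟨δ, hδ, fun θ η h => ?_⟩
  have hθ : x θ = G θ.1 := by rw [hGg θ.1 θ.2, hg]; exact congrArg x (emb_coe θ).symm
  have hη : x η = G η.1 := by rw [hGg η.1 η.2, hg]; exact congrArg x (emb_coe η).symm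
  rw [hθ, hη, ← dist_eq_norm]
  exact hd (by rwa [Real.dist_eq])

end Aux

/-- Lemma 2.5: `f : 𝒞₀ → ℝ` is `|·|_C`-continuous iff the
functional `f̂(t,x) := f(x)` is `d_∞`-continuous on `Λ`. -/
theorem continuity_iff_pathfunctional_continuity {d : ℕ} (f : Pth d → ℝ) :
    (∀ x ∈ C0 d, ∀ ε > (0:ℝ), ∃ δ > (0:ℝ), ∀ y ∈ C0 d,
        normC (x - y) < δ → |f y - f x| < ε) ↔
    (∀ p ∈ Lam d 0, ∀ ε > (0:ℝ), ∃ δ > (0:ℝ), ∀ q ∈ Lam d 0,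
        dInfty p q < δ → |f q.2 - f p.2| < ε) := by
  constructor
  · intro hf p hp ε hε
    obtain ⟨_, hx⟩ := hp
    obtain ⟨δ₁, hδ₁, H1⟩ := hf p.2 hx ε hε
    obtain ⟨h₀, hh₀, Hu⟩ := C0_uniform hx (show (0:ℝ) < δ₁/3 by linarith)
    refine ⟨min h₀ (δ₁/3), by positivity, ?_⟩
    rintro q ⟨_, hy⟩ hdq
    apply H1 q.2 hy
    obtain ⟨Mx, hMx⟩ := C0_bdd hx
    obtain ⟨My, hMy⟩ := C0_bdd hy
    have key : ∀ θ : PathDom, ‖p.2 θ - q.2 θ‖ ≤ 2*δ₁/3 := by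
      intro θ
      unfold dInfty at hdq
      by_cases hts : p.1 ≤ q.1
      · rw [if_pos hts] at hdq
        set h : ℝ := q.1 - p.1 with hh
        have hh0 : 0 ≤ h := sub_nonneg.mpr hts
        have habs : |q.1 - p.1| = h := abs_of_nonneg hh0
        have hN0 : 0 ≤ normC (shift p.2 h - q.2) := normC_nonneg' _
        have hmin1 : min h₀ (δ₁/3) ≤ h₀ := min_le_left _ _
        have hmin2 : min h₀ (δ₁/3) ≤ δ₁/3 := min_le_right _ _
        have hhh : h < h₀ := by rw [habs] at hdq; linarith
        have hN : normC (shift p.2 h - q.2) < δ₁/3 := by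
          rw [habs] at hdq; linarith
        have hpt : ‖shift p.2 h θ - q.2 θ‖ < δ₁/3 := by
          refine lt_of_le_of_lt ?_ hN
          have := le_normC' (x := shift p.2 h - q.2) (M := Mx + My)
            (fun η => le_trans (norm_sub_le _ _)
              (add_le_add (shift_bdd' hMx η) (hMy η))) θ
          simpa using this
        have hfirst : ‖p.2 θ - shift p.2 h θ‖ < δ₁/3 := by
          unfold shift
          split
          · next hθ =>
              refine Hu θ zeroPt ?_
              have hz : (zeroPt : PathDom).1 = 0 := rfl
              rw [hz, sub_zero]
              rw [abs_of_nonpos θ.2]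
              have h2 : θ.1 ≤ 0 := θ.2
              have h3 : -h ≤ θ.1 := hθ
              linarith
          · next hθ =>
              refine Hu θ _ ?_
              show |θ.1 - (θ.1 + h)| < h₀
              rw [show θ.1 - (θ.1 + h) = -h by ring, abs_neg, abs_of_nonneg hh0]
              exact hhh
        calc ‖p.2 θ - q.2 θ‖ ≤ ‖p.2 θ - shift p.2 h θ‖ + ‖shift p.2 h θ - q.2 θ‖ := by
              have := norm_sub_le_norm_sub_add_norm_sub (p.2 θ) (shift p.2 h θ) (q.2 θ)
              exact this
          _ ≤ 2*δ₁/3 := by linarith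
      · rw [if_neg hts] at hdq
        push_neg at hts
        set h : ℝ := p.1 - q.1 with hh
        have hh0 : 0 < h := sub_pos.mpr hts
        have habs : |p.1 - q.1| = h := abs_of_pos hh0
        have hN0 : 0 ≤ normC (shift q.2 h - p.2) := normC_nonneg' _
        have hmin1 : min h₀ (δ₁/3) ≤ h₀ := min_le_left _ _
        have hmin2 : min h₀ (δ₁/3) ≤ δ₁/3 := min_le_right _ _
        have hhh : h < h₀ := by rw [habs] at hdq; linarith
        have hN : normC (shift q.2 h - p.2) < δ₁/3 := by
          rw [habs] at hdq; linarith
        set θ' : PathDom := ⟨θ.1 - h, Set.mem_Iic.mpr (by have h2 : θ.1 ≤ 0 := θ.2; linarith)⟩ with hθ'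
        have hsh : shift q.2 h θ' = q.2 θ := by
          unfold shift
          split
          · next hc =>
              have h0 : θ.1 = 0 := le_antisymm θ.2 (by
                have : -h ≤ θ.1 - h := hc
                linarith)
              exact congrArg q.2 (Subtype.ext h0.symm)
          · next hc =>
              exact congrArg q.2 (Subtype.ext (by show θ.1 - h + h = θ.1; ring))
        have hpt : ‖q.2 θ - p.2 θ'‖ < δ₁/3 := by
          rw [← hsh]
          refine lt_of_le_of_lt ?_ hN
          have := le_normC' (x := shift q.2 h - p.2) (M := My + Mx)
            (fun η => le_trans (norm_sub_le _ _)
              (add_le_add (shift_bdd' hMy η) (hMx η))) θ'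
          simpa using this
        have hfirst : ‖p.2 θ - p.2 θ'‖ < δ₁/3 := by
          refine Hu θ θ' ?_
          show |θ.1 - (θ.1 - h)| < h₀
          rw [show θ.1 - (θ.1 - h) = h by ring, abs_of_pos hh0]
          exact hhh
        calc ‖p.2 θ - q.2 θ‖ ≤ ‖p.2 θ - p.2 θ'‖ + ‖p.2 θ' - q.2 θ‖ :=
              norm_sub_le_norm_sub_add_norm_sub _ _ _
          _ = ‖p.2 θ - p.2 θ'‖ + ‖q.2 θ - p.2 θ'‖ := by rw [norm_sub_rev (p.2 θ')]
          _ ≤ 2*δ₁/3 := by linarith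
    have : normC (p.2 - q.2) ≤ 2*δ₁/3 :=
      normC_le' (by linarith) (fun θ => by simpa using key θ)
    linarith
  · intro hF x hx ε hε
    obtain ⟨δ, hδ, H⟩ := hF (0, x) ⟨le_refl 0, hx⟩ ε hε
    refine ⟨δ, hδ, fun y hy hxy => ?_⟩
    refine H (0, y) ⟨le_refl 0, hy⟩ ?_
    show dInfty (0, x) (0, y) < δ
    unfold dInfty
    rw [if_pos (le_refl (0:ℝ))]
    simpa [sub_self, shift_zero'] using hxy
end PathHJB
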